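/- Let p > 2 and let g : [0,1] → ℝ be non-decreasing and right-continuous with ∫₀¹ |g(u)|^p du < ∞. For n ≥ 1 and u ∈ (0,1) set uₙ(u) = min((⌊nu⌋ + 1)/n, 1). Then ∫₀¹ (g(uₙ(u)) − g(u))² du → 0 as n → ∞. -/

import Mathlib

open MeasureTheory Filter Set

/-- Let `p > 2` and let `g : [0,1] → ℝ` be non-decreasing and
right-continuous with `∫₀¹ |g(u)|^p du < ∞`. With `uₙ(u) = min((⌊nu⌋ + 1)/n, 1)`,
`∫₀¹ (g(uₙ(u)) − g(u))² du → 0` as `n → ∞`. -/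
theorem stmt13 (p : ℝ) (hp : 2 < p) (g : ℝ → ℝ)
    (hmono : MonotoneOn g (Set.Icc 0 1))
    (hrc : ∀ u ∈ Set.Ico (0:ℝ) 1, ContinuousWithinAt g (Set.Ici u) u)
    (hint : IntegrableOn (fun u => |g u| ^ p) (Set.Ioo 0 1)) :
    Filter.Tendsto
      (fun n : ℕ => ∫ u in Set.Ioo (0:ℝ) 1,
        (g (min (((⌊(n : ℝ) * u⌋ : ℝ) + 1) / (n : ℝ)) 1) - g u) ^ 2)
      Filter.atTop (nhds 0) := by
  classical
  set un : ℕ → ℝ → ℝ := fun n u => min (((⌊(n : ℝ) * u⌋ : ℝ) + 1) / (n : ℝ)) 1 with hun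
  set cl : ℝ → ℝ := fun x => max 0 (min x 1) with hcl
  have hclmem : ∀ x, cl x ∈ Icc (0:ℝ) 1 := fun x =>
    ⟨le_max_left _ _, max_le (by norm_num) (min_le_right _ _)⟩
  have hclid : ∀ x ∈ Icc (0:ℝ) 1, cl x = x := fun x hx => by
    simp [hcl, min_eq_left hx.2, max_eq_right hx.1]
  have hclmono : Monotone cl := fun a b hab =>
    max_le_max le_rfl (min_le_min hab le_rfl)
  set G : ℝ → ℝ := fun x => g (cl x) with hG
  have hGmono : Monotone G := fun a b hab =>
    hmono (hclmem a) (hclmem b) (hclmono hab)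
  have hGmeas : Measurable G := hGmono.measurable
  set M : ℝ := |g 0| + |g 1| with hM
  have hGabs : ∀ x, |G x| ≤ M := by
    intro x
    have h0 : g 0 ≤ G x := hmono (left_mem_Icc.mpr zero_le_one) (hclmem x) (hclmem x).1
    have h1 : G x ≤ g 1 := hmono (hclmem x) (right_mem_Icc.mpr zero_le_one) (hclmem x).2
    rw [abs_le]
    constructor
    · nlinarith [neg_abs_le (g 0), abs_nonneg (g 1)]
    · nlinarith [le_abs_self (g 1), abs_nonneg (g 0)]
  have hun_mono : ∀ n : ℕ, Monotone (un n) := by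
    intro n a b hab
    rcases Nat.eq_zero_or_pos n with h0 | hpos
    · simp [hun, h0]
    · have hnpos : (0:ℝ) < n := by exact_mod_cast hpos
      refine min_le_min ?_ le_rfl
      have hf : (⌊(n:ℝ)*a⌋:ℝ) ≤ (⌊(n:ℝ)*b⌋:ℝ) := by
        exact_mod_cast Int.floor_le_floor (mul_le_mul_of_nonneg_left hab (Nat.cast_nonneg n))
      gcongr
  have hun_mem : ∀ n : ℕ, ∀ u ∈ Ioo (0:ℝ) 1, un n u ∈ Icc (0:ℝ) 1 := by
    intro n u hu
    refine ⟨le_min (div_nonneg ?_ (Nat.cast_nonneg n)) zero_le_one, min_le_right _ _⟩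
    have h0 : (0:ℤ) ≤ ⌊(n:ℝ) * u⌋ :=
      Int.floor_nonneg.mpr (mul_nonneg (Nat.cast_nonneg n) hu.1.le)
    have h0' : (0:ℝ) ≤ (⌊(n:ℝ) * u⌋:ℝ) := by exact_mod_cast h0
    linarith
  have hEq : ∀ n : ℕ, ∀ u ∈ Ioo (0:ℝ) 1,
      (g (un n u) - g u) ^ 2 = (G (un n u) - G u) ^ 2 := by
    intro n u hu
    have h1 : G (un n u) = g (un n u) := by
      simp only [hG]; rw [hclid _ (hun_mem n u hu)]
    have h2 : G u = g u := by
      simp only [hG]; rw [hclid _ ⟨hu.1.le, hu.2.le⟩]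
    rw [h1, h2]
  -- pointwise convergence
  have hb1 : ∀ u ∈ Ioo (0:ℝ) 1, ∀ n : ℕ, 1 ≤ n → u ≤ un n u := by
    intro u hu n hn
    have hnpos : (0:ℝ) < n := by exact_mod_cast hn
    refine le_min ?_ hu.2.le
    rw [le_div_iff₀ hnpos]
    have hfl := Int.lt_floor_add_one ((n:ℝ) * u)
    nlinarith
  have hb2 : ∀ u ∈ Ioo (0:ℝ) 1, ∀ n : ℕ, 1 ≤ n → un n u ≤ u + 1 / n := by
    intro u hu n hn
    have hnpos : (0:ℝ) < n := by exact_mod_cast hn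
    refine (min_le_left _ _).trans ?_
    rw [div_le_iff₀ hnpos]
    have hfl := Int.floor_le ((n:ℝ) * u)
    have he : (u + 1 / n) * n = (n:ℝ) * u + 1 := by field_simp
    linarith
  have hlim : ∀ u ∈ Ioo (0:ℝ) 1,
      Tendsto (fun n : ℕ => (g (un n u) - g u) ^ 2) atTop (nhds 0) := by
    intro u hu
    have htend : Tendsto (fun n : ℕ => un n u) atTop (nhds u) := by
      have h2 : Tendsto (fun n : ℕ => u + 1 / (n:ℝ)) atTop (nhds (u + 0)) :=
        tendsto_const_nhds.add tendsto_one_div_atTop_nhds_zero_nat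
      rw [add_zero] at h2
      refine tendsto_of_tendsto_of_tendsto_of_le_of_le' tendsto_const_nhds h2 ?_ ?_
      · filter_upwards [eventually_ge_atTop 1] with n hn using hb1 u hu n hn
      · filter_upwards [eventually_ge_atTop 1] with n hn using hb2 u hu n hn
    have hcw := hrc u ⟨hu.1.le, hu.2⟩
    have hgt : Tendsto (fun n : ℕ => g (un n u)) atTop (nhds (g u)) := by
      apply hcw.tendsto.comp
      rw [tendsto_nhdsWithin_iff]
      refine ⟨htend, ?_⟩
      filter_upwards [eventually_ge_atTop 1] with n hn using hb1 u hu n hn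
    have h := (hgt.sub (tendsto_const_nhds (x := g u))).pow 2
    simpa using h
  -- dominated convergence
  have key := tendsto_integral_filter_of_dominated_convergence
      (μ := volume.restrict (Ioo (0:ℝ) 1)) (l := atTop)
      (F := fun n u => (g (un n u) - g u) ^ 2) (f := fun _ => (0:ℝ))
      (bound := fun _ => (2 * M) ^ 2)
      (by
        filter_upwards [eventually_ge_atTop 1] with n _
        have hm : Measurable fun u => (G (un n u) - G u) ^ 2 :=
          ((hGmono.comp (hun_mono n)).measurable.sub hGmeas).pow_const 2
        refine hm.aestronglyMeasurable.congr ?_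
        exact Filter.eventuallyEq_of_mem (self_mem_ae_restrict measurableSet_Ioo)
          fun u hu => (hEq n u hu).symm)
      (by
        filter_upwards [eventually_ge_atTop 1] with n _
        refine (ae_restrict_iff' measurableSet_Ioo).mpr (Filter.Eventually.of_forall ?_)
        intro u hu
        rw [hEq n u hu, Real.norm_eq_abs, abs_of_nonneg (sq_nonneg _), ← sq_abs]
        have h1 : |G (un n u) - G u| ≤ 2 * M := by
          calc |G (un n u) - G u| ≤ |G (un n u)| + |G u| := abs_sub _ _
            _ ≤ 2 * M := by linarith [hGabs (un n u), hGabs u]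
        exact pow_le_pow_left₀ (abs_nonneg _) h1 2)
      (integrableOn_const measure_Ioo_lt_top.ne)
      ((ae_restrict_iff' measurableSet_Ioo).mpr (Filter.Eventually.of_forall
        fun u hu => hlim u hu))
  simpa using key
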